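/- Let p be a nonprincipal strongly summable ultrafilter on the Boolean group 𝔹 and let Z be an infinite linearly independent subset of 𝔹 with FS(Z) ∈ p. Then there is a set B ∈ p and an infinite subset W ⊆ Z such that FS(W) ∩ B = ∅. -/

import Mathlib

open scoped BigOperators

/-- The countable Boolean group, realized as `ℕ →₀ ZMod 2` (equivalently, finite subsets
of ℕ under symmetric difference), a vector space over `𝔽₂ = ZMod 2`. -/
abbrev BoolGrp : Type := ℕ →₀ ZMod 2

/-- The set of finite sums (symmetric differences) of nonempty finite subsets of `X`. -/
def FSset (X : Set BoolGrp) : Set BoolGrp :=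
  {g | ∃ S : Finset BoolGrp, S.Nonempty ∧ ↑S ⊆ X ∧ g = ∑ v ∈ S, v}

/-- An ultrafilter `p` on the Boolean group is strongly summable if every `A ∈ p`
contains an FS-set, of an infinite set, belonging to `p`. -/
def StronglySummableSet (p : Ultrafilter BoolGrp) : Prop :=
  ∀ A ∈ p, ∃ X : Set BoolGrp, X.Infinite ∧ FSset X ∈ p ∧ FSset X ⊆ A

lemma sum_ne_zero_of_subset {Z : Set BoolGrp}
    (hZli : LinearIndependent (ZMod 2) ((↑) : Z → BoolGrp))
    (S : Finset BoolGrp) (hS : S.Nonempty) (hSZ : ↑S ⊆ Z) :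
    ∑ v ∈ S, v ≠ 0 := by
  classical
  intro h0
  set T : Finset Z := S.preimage Subtype.val (Subtype.val_injective.injOn) with hT
  obtain ⟨v, hv⟩ := hS
  have hvZ : v ∈ Z := hSZ hv
  have hvT : (⟨v, hvZ⟩ : Z) ∈ T := by simp [hT, Finset.mem_preimage, hv]
  have hsum : ∑ i ∈ T, (1 : ZMod 2) • (i : BoolGrp) = 0 := by
    have := Finset.sum_preimage (Subtype.val : Z → BoolGrp) S
      (Subtype.val_injective.injOn) (fun x => x)
      (fun x hx hxr => absurd ⟨⟨x, hSZ hx⟩, rfl⟩ hxr)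
    simpa [hT, this] using h0
  have := linearIndependent_iff'.mp hZli T (fun _ => 1) hsum ⟨v, hvZ⟩ hvT
  exact one_ne_zero this

lemma boolgrp_add_self (x : BoolGrp) : x + x = 0 := by
  ext n
  simp [CharTwo.add_self_eq_zero]

lemma FS_disjoint {Z W1 W2 : Set BoolGrp}
    (hZli : LinearIndependent (ZMod 2) ((↑) : Z → BoolGrp))
    (h1 : W1 ⊆ Z) (h2 : W2 ⊆ Z) (hd : Disjoint W1 W2) :
    FSset W1 ∩ FSset W2 = ∅ := by
  classical
  ext g
  simp only [Set.mem_inter_iff, Set.mem_empty_iff_false, iff_false]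
  rintro ⟨⟨S1, hS1ne, hS1sub, rfl⟩, ⟨S2, hS2ne, hS2sub, hg2⟩⟩
  have hdS : Disjoint S1 S2 := by
    rw [Finset.disjoint_left]
    intro a ha1 ha2
    exact (hd.le_bot ⟨hS1sub ha1, hS2sub ha2⟩ : a ∈ (∅ : Set BoolGrp))
  have hzero : ∑ v ∈ S1 ∪ S2, v = 0 := by
    rw [Finset.sum_union hdS, ← hg2, boolgrp_add_self]
  exact sum_ne_zero_of_subset hZli (S1 ∪ S2)
    (hS1ne.mono Finset.subset_union_left)
    (by
      intro x hx
      rcases Finset.mem_union.mp hx with h | h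
      · exact h1 (hS1sub h)
      · exact h2 (hS2sub h)) hzero


/-- Let `p` be a nonprincipal strongly summable ultrafilter on the Boolean group and `Z`
an infinite linearly independent set with `FS(Z) ∈ p`. Then there are `B ∈ p` and an
infinite `W ⊆ Z` with `FS(W) ∩ B = ∅`. -/
theorem exists_infinite_subfamily_FS_disjoint (p : Ultrafilter BoolGrp)
    (hss : StronglySummableSet p) (hnp : ∀ b : BoolGrp, p ≠ pure b)
    (Z : Set BoolGrp) (hZinf : Z.Infinite)
    (hZli : LinearIndependent (ZMod 2) ((↑) : Z → BoolGrp))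
    (hFZ : FSset Z ∈ p) :
    ∃ B ∈ p, ∃ W ⊆ Z, W.Infinite ∧ FSset W ∩ B = ∅ := by
  classical
  set e : ℕ ↪ Z := hZinf.natEmbedding Z
  set g : ℕ → BoolGrp := fun n => (e n : BoolGrp) with hgdef
  have hginj : Function.Injective g := Subtype.val_injective.comp e.injective
  set W1 : Set BoolGrp := Set.range (fun k => g (2 * k)) with hW1
  set W2 : Set BoolGrp := Set.range (fun k => g (2 * k + 1)) with hW2
  have hW1Z : W1 ⊆ Z := by rintro _ ⟨k, rfl⟩; exact (e (2 * k)).2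
  have hW2Z : W2 ⊆ Z := by rintro _ ⟨k, rfl⟩; exact (e (2 * k + 1)).2
  have hW1inf : W1.Infinite :=
    Set.infinite_range_of_injective (fun a b h => by
      have := hginj h; omega)
  have hW2inf : W2.Infinite :=
    Set.infinite_range_of_injective (fun a b h => by
      have := hginj h; omega)
  have hdisj : Disjoint W1 W2 := by
    rw [Set.disjoint_left]
    rintro _ ⟨a, rfl⟩ ⟨b, hb⟩
    have := hginj hb.symm
    omega
  have hFSdisj : FSset W1 ∩ FSset W2 = ∅ := FS_disjoint hZli hW1Z hW2Z hdisj
  by_cases h1 : FSset W1 ∈ p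
  · have h2 : FSset W2 ∉ p := by
      intro h2
      have : FSset W1 ∩ FSset W2 ∈ p := Filter.inter_mem h1 h2
      rw [hFSdisj] at this
      exact (Filter.empty_notMem (p : Filter BoolGrp)) this
    exact ⟨(FSset W2)ᶜ, Ultrafilter.compl_mem_iff_notMem.mpr h2, W2, hW2Z, hW2inf,
      Set.inter_compl_self _⟩
  · exact ⟨(FSset W1)ᶜ, Ultrafilter.compl_mem_iff_notMem.mpr h1, W1, hW1Z, hW1inf,
      Set.inter_compl_self _⟩
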